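/- There exist universal constants C, C₁, C₂ > 0 with the following property. For every positive integer n and every ρ ∈ (0, 1/2) there exists a finite set 𝒩 ⊆ 2B₂ⁿ \ (1/2)B₂ⁿ with #𝒩 ≤ (C/ρ)ⁿ such that for every positive integer N, every linear map A : ℝⁿ → ℝ^N, and every ξ ∈ S^{n−1}, there exists η ∈ 𝒩 with |Aη|² ≤ C₁|Aξ|² + C₂·(ρ²/n)·‖A‖_{HS}². -/

import Mathlib

set_option maxHeartbeats 1000000

open MeasureTheory Metric Set
open scoped RealInnerProductSpace

lemma coord_abs_le_norm {n : ℕ} (x : EuclideanSpace ℝ (Fin n)) (j : Fin n) : |x j| ≤ ‖x‖ := by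
  rw [EuclideanSpace.norm_eq]
  rw [show |x j| = Real.sqrt (‖x j‖^2) by rw [Real.sqrt_sq_eq_abs]; simp]
  apply Real.sqrt_le_sqrt
  exact Finset.single_le_sum (f := fun i => ‖x i‖^2) (fun i _ => by positivity) (Finset.mem_univ j)

lemma geom_bound (t : ℝ) (ht : 4 ≤ t) (m : ℕ) :
    ∑ k ∈ Finset.range m, Real.exp (-(k:ℝ)/t) ≤ Real.exp (1/4) * t := by
  have ht0 : 0 < t := by linarith
  set r := Real.exp (-1/t) with hr
  have hr0 : 0 < r := Real.exp_pos _
  have hr1 : r < 1 := by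
    rw [hr, Real.exp_lt_one_iff]
    have : 0 < 1/t := by positivity
    have : -1/t = -(1/t) := by ring
    rw [this]; linarith
  have hterm : ∀ k : ℕ, Real.exp (-(k:ℝ)/t) = r ^ k := by
    intro k
    rw [hr, ← Real.exp_nat_mul]
    ring_nf
  have hsum : ∑ k ∈ Finset.range m, Real.exp (-(k:ℝ)/t) = ∑ k ∈ Finset.range m, r ^ k := by
    exact Finset.sum_congr rfl fun k _ => hterm k
  rw [hsum, geom_sum_eq (ne_of_lt hr1)]
  have hrm : 0 ≤ r ^ m := by positivity
  have h1r : 0 < 1 - r := by linarith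
  have key : Real.exp (-(1:ℝ)/4) / t ≤ 1 - r := by
    have h1 : 1/t + 1 ≤ Real.exp (1/t) := Real.add_one_le_exp _
    have h2 : r * Real.exp (1/t) = 1 := by
      rw [hr, ← Real.exp_add]; ring_nf; exact Real.exp_zero
    have h3 : r * (1/t) ≤ 1 - r := by nlinarith
    have h4 : Real.exp (-(1:ℝ)/4) ≤ r := by
      rw [hr]; apply Real.exp_le_exp.2
      rw [div_le_div_iff₀ (by norm_num) ht0]; nlinarith
    calc Real.exp (-(1:ℝ)/4)/t ≤ r / t := by gcongr
      _ ≤ 1 - r := by rw [div_eq_mul_one_div]; exact h3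
  have hek : Real.exp (-(1:ℝ)/4) * Real.exp (1/4) = 1 := by
    rw [← Real.exp_add]; norm_num
  have he4 : 0 < Real.exp (-(1:ℝ)/4) := Real.exp_pos _
  have h5 : (r ^ m - 1) / (r - 1) = (1 - r ^ m) / (1 - r) := by
    rw [div_eq_div_iff (by linarith) (by linarith)]; ring
  rw [h5]
  have h6 : (1 - r ^ m) / (1 - r) ≤ 1 / (1 - r) := by (gcongr; linarith)
  have h7 : 1 / (1 - r) ≤ Real.exp (1/4) * t := by
    rw [div_le_iff₀ h1r]
    have := mul_le_mul_of_nonneg_left key (le_of_lt (Real.exp_pos (1/4)))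
    calc (1:ℝ) = Real.exp (1/4) * (Real.exp (-(1:ℝ)/4)) := by rw [mul_comm]; rw [← Real.exp_add]; norm_num
      _ = Real.exp (1/4) * (Real.exp (-(1:ℝ)/4)/t) * t := by field_simp
      _ ≤ Real.exp (1/4) * (1-r) * t := by
          apply mul_le_mul_of_nonneg_right _ (le_of_lt ht0)
          exact mul_le_mul_of_nonneg_left key (le_of_lt (Real.exp_pos (1/4)))
      _ = Real.exp (1/4) * t * (1 - r) := by ring
  linarith

lemma coord_bound (t : ℝ) (ht : 4 ≤ t) (M : ℕ) :
    ∑ a ∈ Finset.Icc (-(M:ℤ)) M, Real.exp (1 - (a:ℝ)^2/t^2) ≤ 10 * t := by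
  have ht0 : 0 < t := by linarith
  have hpt : ∀ a : ℤ, Real.exp (1 - (a:ℝ)^2/t^2) ≤ Real.exp (5/4) * Real.exp (-|(a:ℝ)|/t) := by
    intro a
    rw [← Real.exp_add]
    apply Real.exp_le_exp.2
    have h1 : (0:ℝ) ≤ |(a:ℝ)|/t := by positivity
    have h2 : (|(a:ℝ)|/t) - (|(a:ℝ)|/t)^2 ≤ 1/4 := by nlinarith [sq_nonneg (|(a:ℝ)|/t - 1/2)]
    have h4 : (a:ℝ)^2/t^2 = (|(a:ℝ)|/t)^2 := by rw [div_pow, sq_abs]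
    rw [h4]
    have hneg : -|(a:ℝ)|/t = -(|(a:ℝ)|/t) := by ring
    rw [hneg]; linarith
  calc ∑ a ∈ Finset.Icc (-(M:ℤ)) M, Real.exp (1 - (a:ℝ)^2/t^2)
      ≤ ∑ a ∈ Finset.Icc (-(M:ℤ)) M, Real.exp (5/4) * Real.exp (-|(a:ℝ)|/t) :=
        Finset.sum_le_sum fun a _ => hpt a
    _ = Real.exp (5/4) * ∑ a ∈ Finset.Icc (-(M:ℤ)) M, Real.exp (-|(a:ℝ)|/t) := by
        rw [Finset.mul_sum]
    _ ≤ Real.exp (5/4) * (2 * (Real.exp (1/4) * t)) := by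
        apply mul_le_mul_of_nonneg_left _ (le_of_lt (Real.exp_pos _))
        have hsub : Finset.Icc (-(M:ℤ)) M ⊆
            (Finset.range (M+1)).image (fun k : ℕ => (k:ℤ)) ∪
            (Finset.range (M+1)).image (fun k : ℕ => -(k:ℤ)) := by
          intro a ha
          simp only [Finset.mem_Icc] at ha
          simp only [Finset.mem_union, Finset.mem_image, Finset.mem_range]
          rcases le_or_gt 0 a with h | h
          · exact Or.inl ⟨a.toNat, by omega, by omega⟩
          · exact Or.inr ⟨(-a).toNat, by omega, by omega⟩
        have hnn : ∀ a : ℤ, 0 ≤ Real.exp (-|(a:ℝ)|/t) := fun a => (Real.exp_pos _).le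
        set s1 := (Finset.range (M+1)).image (fun k : ℕ => (k:ℤ)) with hs1
        set s2 := (Finset.range (M+1)).image (fun k : ℕ => -(k:ℤ)) with hs2
        calc ∑ a ∈ Finset.Icc (-(M:ℤ)) M, Real.exp (-|(a:ℝ)|/t)
            ≤ ∑ a ∈ s1 ∪ s2, Real.exp (-|(a:ℝ)|/t) :=
              Finset.sum_le_sum_of_subset_of_nonneg hsub (fun a _ _ => hnn a)
          _ ≤ ∑ a ∈ s1, Real.exp (-|(a:ℝ)|/t) + ∑ a ∈ s2, Real.exp (-|(a:ℝ)|/t) := by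
              have hui : ∑ a ∈ s1 ∪ s2, Real.exp (-|(a:ℝ)|/t)
                  + ∑ a ∈ s1 ∩ s2, Real.exp (-|(a:ℝ)|/t)
                  = ∑ a ∈ s1, Real.exp (-|(a:ℝ)|/t) + ∑ a ∈ s2, Real.exp (-|(a:ℝ)|/t) :=
                Finset.sum_union_inter
              have hnn2 : 0 ≤ ∑ a ∈ s1 ∩ s2, Real.exp (-|(a:ℝ)|/t) :=
                Finset.sum_nonneg fun a _ => hnn a
              linarith
          _ ≤ 2 * (Real.exp (1/4) * t) := by
              have e1 : ∑ a ∈ s1, Real.exp (-|(a:ℝ)|/t)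
                  = ∑ k ∈ Finset.range (M+1), Real.exp (-(k:ℝ)/t) := by
                rw [hs1, Finset.sum_image (by intro x _ y _ h; simp only at h; exact_mod_cast h)]
                apply Finset.sum_congr rfl; intro k _
                norm_num
              have e2 : ∑ a ∈ s2, Real.exp (-|(a:ℝ)|/t)
                  = ∑ k ∈ Finset.range (M+1), Real.exp (-(k:ℝ)/t) := by
                rw [hs2, Finset.sum_image (by intro x _ y _ h; simp only at h; omega)]
                apply Finset.sum_congr rfl; intro k _
                norm_num
              rw [e1, e2]
              have := geom_bound t ht (M+1)
              linarith
    _ ≤ 10 * t := by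
        have h : Real.exp (5/4) * (2 * (Real.exp (1/4) * t)) = 2 * Real.exp (3/2) * t := by
          rw [show Real.exp (5/4) * (2 * (Real.exp (1/4) * t))
              = 2 * (Real.exp (5/4) * Real.exp (1/4)) * t by ring, ← Real.exp_add]
          norm_num
        rw [h]
        have he : Real.exp (3/2) ≤ 5 := by
          have h2 : Real.exp (3/2) ^ 2 = Real.exp 3 := by
            rw [← Real.exp_nat_mul]; norm_num
          have h3 : Real.exp 3 = Real.exp 1 ^ 3 := by
            rw [← Real.exp_nat_mul]; norm_num
          have h4 : Real.exp 1 < 2.7182818286 := Real.exp_one_lt_d9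
          have h5 : Real.exp (3/2)^2 < 25 := by
            rw [h2, h3]
            have h4 : Real.exp 1 < 2.7182818286 := Real.exp_one_lt_d9
            have h6 : Real.exp 1 ^ 3 < 2.7182818286^3 :=
              pow_lt_pow_left₀ h4 (Real.exp_pos 1).le (by norm_num)
            have h7 : (2.7182818286:ℝ)^3 < 25 := by norm_num
            linarith
          nlinarith [h5, Real.exp_pos (3/2)]
        nlinarith [Real.exp_pos (3/2)]


lemma round_exists {n N : ℕ} (δ : ℝ) (hδ : 0 < δ)
    (A : EuclideanSpace ℝ (Fin n) →ₗ[ℝ] EuclideanSpace ℝ (Fin N))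
    (ξ : EuclideanSpace ℝ (Fin n)) (s : Finset (Fin n)) :
    ∃ η : EuclideanSpace ℝ (Fin n), (∀ j, j ∉ s → η j = ξ j) ∧
      (∀ j ∈ s, (∃ m : ℤ, η j = δ * m) ∧ |η j - ξ j| ≤ δ) ∧
      ‖A (η - ξ)‖ ^ 2 ≤ δ^2 * ∑ j ∈ s, ‖A (EuclideanSpace.single j (1:ℝ))‖^2 := by
  classical
  induction s using Finset.induction_on with
  | empty =>
      refine ⟨ξ, fun j _ => rfl, fun j hj => absurd hj (Finset.notMem_empty j), ?_⟩
      simp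
  | @insert j s hj IH =>
      obtain ⟨η, hout, hin, hnorm⟩ := IH
      set w := A (EuclideanSpace.single j (1:ℝ)) with hw
      set u := A (η - ξ) with hu
      set b : ℤ := ⌊ξ j / δ⌋ with hb
      have hfl : δ * b ≤ ξ j := by
        have := Int.floor_le (ξ j / δ)
        rw [← hb] at this
        calc δ * b ≤ δ * (ξ j / δ) := by nlinarith
          _ = ξ j := by field_simp
      have hfu : ξ j < δ * (b + 1) := by
        have := Int.lt_floor_add_one (ξ j / δ)
        rw [← hb] at this
        calc ξ j = δ * (ξ j / δ) := by field_simp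
          _ < δ * (b + 1) := by push_cast; nlinarith
      set γ : ℝ := if 0 ≤ ⟪u, w⟫ then δ * b - ξ j else δ * (b + 1) - ξ j with hγ
      have hγabs : |γ| ≤ δ ∧ γ * ⟪u, w⟫ ≤ 0 := by
        rw [hγ]; split_ifs with hc
        · constructor
          · rw [abs_le]; constructor <;> nlinarith
          · nlinarith
        · push_neg at hc
          constructor
          · rw [abs_le]; constructor <;> nlinarith
          · nlinarith
      refine ⟨η + γ • EuclideanSpace.single j (1:ℝ), ?_, ?_, ?_⟩
      · intro i hi
        have hij : i ≠ j := fun h => hi (h ▸ Finset.mem_insert_self j s)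
        have his : i ∉ s := fun h => hi (Finset.mem_insert_of_mem h)
        simp only [PiLp.add_apply, PiLp.smul_apply, EuclideanSpace.single_apply,
          if_neg hij, smul_zero, add_zero]
        exact hout i his
      · intro i hi
        rcases Finset.mem_insert.1 hi with rfl | his
        · have hηj : η i = ξ i := hout i hj
          have happ : (η + γ • EuclideanSpace.single i (1:ℝ)) i = ξ i + γ := by
            simp [PiLp.add_apply, PiLp.smul_apply, EuclideanSpace.single_apply, hηj]
          rw [happ]
          constructor
          · rw [hγ]; split_ifs with hc
            · exact ⟨b, by ring⟩
            · exact ⟨b + 1, by push_cast; ring⟩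
          · simpa using hγabs.1
        · have hij : i ≠ j := fun h => hj (h ▸ his)
          have happ : (η + γ • EuclideanSpace.single j (1:ℝ)) i = η i := by
            simp [PiLp.add_apply, PiLp.smul_apply, EuclideanSpace.single_apply, hij]
          rw [happ]
          exact hin i his
      · have hd : η + γ • EuclideanSpace.single j (1:ℝ) - ξ
            = (η - ξ) + γ • EuclideanSpace.single j (1:ℝ) := add_sub_right_comm η _ ξ
        rw [hd, map_add, _root_.map_smul]
        rw [← hu, ← hw]
        have hexp : ‖u + γ • w‖^2 = ‖u‖^2 + 2 * (γ * ⟪u, w⟫) + γ^2 * ‖w‖^2 := by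
          rw [norm_add_sq_real, real_inner_smul_right, norm_smul]
          rw [mul_pow, Real.norm_eq_abs, sq_abs]
        rw [Finset.sum_insert hj, mul_add]
        have h1 : γ^2 ≤ δ^2 := by nlinarith [hγabs.1, abs_nonneg γ, sq_abs γ]
        have h2 : γ^2 * ‖w‖^2 ≤ δ^2 * ‖w‖^2 :=
          mul_le_mul_of_nonneg_right h1 (sq_nonneg _)
        rw [← hw]
        linarith [hexp, hnorm, hγabs.2, h2]


theorem net_comparison_hilbert_schmidt :
    ∃ C C₁ C₂ : ℝ, 0 < C ∧ 0 < C₁ ∧ 0 < C₂ ∧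
      ∀ n : ℕ, 0 < n → ∀ ρ : ℝ, ρ ∈ Set.Ioo (0 : ℝ) (1 / 2) →
        ∃ 𝒩 : Finset (EuclideanSpace ℝ (Fin n)),
          (↑𝒩 : Set (EuclideanSpace ℝ (Fin n))) ⊆
              closedBall 0 2 \ closedBall 0 (1 / 2) ∧
          (𝒩.card : ℝ) ≤ (C / ρ) ^ n ∧
          ∀ N : ℕ, ∀ A : EuclideanSpace ℝ (Fin n) →ₗ[ℝ] EuclideanSpace ℝ (Fin N),
            ∀ ξ : EuclideanSpace ℝ (Fin n), ‖ξ‖ = 1 →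
              ∃ η ∈ 𝒩, ‖A η‖ ^ 2 ≤ C₁ * ‖A ξ‖ ^ 2 +
                C₂ * (ρ ^ 2 / n) *
                  ∑ j : Fin n, ‖A (EuclideanSpace.single j (1 : ℝ))‖ ^ 2 := by
  classical
  refine ⟨20, 2, 2, by norm_num, by norm_num, by norm_num, ?_⟩
  intro n hn ρ hρ
  obtain ⟨hρ0, hρ2⟩ := hρ
  have hn0 : (0:ℝ) < n := by exact_mod_cast hn
  have hsn : 0 < Real.sqrt n := Real.sqrt_pos.2 hn0
  set δ : ℝ := ρ / Real.sqrt n with hδdef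
  have hδ : 0 < δ := by positivity
  have hδsq : δ^2 = ρ^2 / n := by
    rw [hδdef, div_pow, Real.sq_sqrt hn0.le]
  set t : ℝ := 2 / ρ with htdef
  have ht : 4 ≤ t := by
    rw [htdef, le_div_iff₀ hρ0]; linarith
  have ht0 : 0 < t := by linarith
  set M : ℕ := Nat.ceil (2/δ) with hM
  set F : (Fin n → ℤ) → EuclideanSpace ℝ (Fin n) :=
    fun k => (WithLp.toLp 2 (fun j => δ * (k j : ℝ)) : EuclideanSpace ℝ (Fin n)) with hF
  have hFnorm : ∀ k, ‖F k‖ = Real.sqrt (∑ j, (δ * (k j : ℝ))^2) := by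
    intro k
    rw [EuclideanSpace.norm_eq]
    congr 1
    refine Finset.sum_congr rfl fun j _ => ?_
    rw [Real.norm_eq_abs, sq_abs]
  set S : Finset (Fin n → ℤ) :=
    (Fintype.piFinset fun _ : Fin n => Finset.Icc (-(M:ℤ)) M).filter
      (fun k => 1/2 < ‖F k‖ ∧ ‖F k‖ ≤ 2) with hS
  refine ⟨S.image F, ?_, ?_, ?_⟩
  · -- subset of annulus
    intro x hx
    simp only [Finset.coe_image, Set.mem_image, Finset.mem_coe] at hx
    obtain ⟨k, hk, rfl⟩ := hx
    rw [hS, Finset.mem_filter] at hk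
    obtain ⟨-, h1, h2⟩ := hk
    constructor
    · exact mem_closedBall_zero_iff.2 h2
    · intro h
      exact absurd (mem_closedBall_zero_iff.1 h) (not_le.2 h1)
  · -- cardinality
    have hcard : ((S.image F).card : ℝ) ≤ (S.card : ℝ) := by
      exact_mod_cast Finset.card_image_le
    have hkey : ∀ k ∈ S, ∑ j, ((k j : ℝ))^2 ≤ n * t^2 := by
      intro k hk
      rw [hS, Finset.mem_filter] at hk
      have h2 := hk.2.2
      rw [hFnorm] at h2
      have hsum0 : 0 ≤ ∑ j, (δ * (k j : ℝ))^2 := Finset.sum_nonneg fun j _ => sq_nonneg _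
      have h4 : ∑ j, (δ * (k j : ℝ))^2 ≤ 4 := by
        have := Real.sq_sqrt hsum0
        nlinarith [Real.sqrt_nonneg (∑ j, (δ * (k j : ℝ))^2)]
      have he : ∑ j, (δ * (k j : ℝ))^2 = δ^2 * ∑ j, ((k j : ℝ))^2 := by
        rw [Finset.mul_sum]; exact Finset.sum_congr rfl fun j _ => by ring
      rw [he] at h4
      have hnt : δ^2 * (n * t^2) = 4 := by
        rw [hδsq, htdef]; field_simp; ring
      nlinarith [pow_pos hδ 2]
    have hstep : (S.card : ℝ) ≤ (10 * t)^n := by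
      have e1 : (S.card : ℝ) = ∑ _k ∈ S, (1:ℝ) := by
        rw [Finset.sum_const]; simp
      rw [e1]
      have e2 : ∑ _k ∈ S, (1:ℝ) ≤ ∑ k ∈ S, ∏ j, Real.exp (1 - ((k j : ℝ))^2/t^2) := by
        apply Finset.sum_le_sum
        intro k hk
        rw [← Real.exp_sum]
        rw [show ∑ j : Fin n, (1 - ((k j : ℝ))^2/t^2)
            = n - (∑ j, ((k j : ℝ))^2)/t^2 by
          rw [Finset.sum_sub_distrib, Finset.sum_const, Finset.card_univ]
          simp [Finset.sum_div]]
        rw [show (1:ℝ) = Real.exp 0 by rw [Real.exp_zero]]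
        apply Real.exp_le_exp.2
        rw [sub_nonneg, div_le_iff₀ (by positivity : (0:ℝ) < t^2)]
        linarith [hkey k hk]
      have e3 : ∑ k ∈ S, ∏ j, Real.exp (1 - ((k j : ℝ))^2/t^2)
          ≤ ∑ k ∈ Fintype.piFinset (fun _ : Fin n => Finset.Icc (-(M:ℤ)) M),
              ∏ j, Real.exp (1 - ((k j : ℝ))^2/t^2) := by
        apply Finset.sum_le_sum_of_subset_of_nonneg
        · rw [hS]; exact Finset.filter_subset _ _
        · intro k _ _
          exact Finset.prod_nonneg fun j _ => (Real.exp_pos _).le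
      have e4 : ∑ k ∈ Fintype.piFinset (fun _ : Fin n => Finset.Icc (-(M:ℤ)) M),
              ∏ j, Real.exp (1 - ((k j : ℝ))^2/t^2)
          = ∏ _j : Fin n, ∑ a ∈ Finset.Icc (-(M:ℤ)) M, Real.exp (1 - ((a : ℝ))^2/t^2) :=
        (Finset.prod_univ_sum (fun _ : Fin n => Finset.Icc (-(M:ℤ)) M)
          (fun _ a => Real.exp (1 - ((a : ℝ))^2/t^2))).symm
      have e5 : ∏ _j : Fin n, ∑ a ∈ Finset.Icc (-(M:ℤ)) M, Real.exp (1 - ((a : ℝ))^2/t^2)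
          ≤ ∏ _j : Fin n, (10 * t) := by
        apply Finset.prod_le_prod
        · intro j _
          exact Finset.sum_nonneg fun a _ => (Real.exp_pos _).le
        · intro j _
          exact coord_bound t ht M
      have e6 : ∏ _j : Fin n, (10 * t) = (10 * t)^n := by
        rw [Finset.prod_const, Finset.card_univ, Fintype.card_fin]
      linarith
    have hfin : (10 * t)^n = (20 / ρ)^n := by
      congr 1
      rw [htdef]; ring
    calc ((S.image F).card : ℝ) ≤ (S.card : ℝ) := hcard
      _ ≤ (10 * t)^n := hstep
      _ = (20 / ρ)^n := hfin
  · -- main estimate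
    intro N A ξ hξ
    obtain ⟨η, -, hin, hnorm⟩ := round_exists δ hδ A ξ Finset.univ
    have hin' : ∀ j, (∃ m : ℤ, η j = δ * m) ∧ |η j - ξ j| ≤ δ :=
      fun j => hin j (Finset.mem_univ j)
    -- ‖η - ξ‖ ≤ ρ
    have hdiff : ‖η - ξ‖ ≤ ρ := by
      rw [EuclideanSpace.norm_eq]
      have hb : ∑ i, ‖(η - ξ) i‖^2 ≤ ρ^2 := by
        have hptw : ∀ i : Fin n, ‖(η - ξ) i‖^2 ≤ δ^2 := by
          intro i
          have : (η - ξ) i = η i - ξ i := rfl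
          rw [this, Real.norm_eq_abs]
          calc |η i - ξ i|^2 = |η i - ξ i|^2 := rfl
            _ ≤ δ^2 := pow_le_pow_left₀ (abs_nonneg _) (hin' i).2 2
        calc ∑ i, ‖(η - ξ) i‖^2 ≤ ∑ _i : Fin n, δ^2 :=
              Finset.sum_le_sum fun i _ => hptw i
          _ = n * δ^2 := by rw [Finset.sum_const, Finset.card_univ, Fintype.card_fin, nsmul_eq_mul]
          _ = ρ^2 := by rw [hδsq]; field_simp
      calc Real.sqrt (∑ i, ‖(η - ξ) i‖^2) ≤ Real.sqrt (ρ^2) := Real.sqrt_le_sqrt hb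
        _ = ρ := Real.sqrt_sq hρ0.le
    have habs : |‖η‖ - ‖ξ‖| ≤ ‖η - ξ‖ := abs_norm_sub_norm_le η ξ
    rw [hξ] at habs
    have hη2 : ‖η‖ ≤ 2 := by
      have := abs_le.1 habs
      linarith [this.2]
    have hη12 : 1/2 < ‖η‖ := by
      have := abs_le.1 habs
      linarith [this.1]
    -- η ∈ net
    set k : Fin n → ℤ := fun j => ((hin' j).1).choose with hkdef
    have hkspec : ∀ j, η j = δ * k j := fun j => ((hin' j).1).choose_spec
    have hFk : F k = η := by
      ext j
      exact (hkspec j).symm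
    have hmem : η ∈ S.image F := by
      apply Finset.mem_image.2
      refine ⟨k, ?_, hFk⟩
      rw [hS, Finset.mem_filter]
      refine ⟨?_, ?_, ?_⟩
      · rw [Fintype.mem_piFinset]
        intro j
        rw [Finset.mem_Icc, ← abs_le]
        have hco : |η j| ≤ ‖η‖ := coord_abs_le_norm η j
        have h1 : δ * |(k j : ℝ)| ≤ 2 := by
          rw [← abs_of_pos hδ, ← abs_mul, ← hkspec j]
          linarith
        have h2 : (|(k j : ℝ)|) ≤ 2/δ := by
          rw [le_div_iff₀ hδ]; linarith [mul_comm δ |(k j : ℝ)|]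
        have h3 : (|(k j : ℝ)|) ≤ (M : ℝ) := le_trans h2 (Nat.le_ceil _)
        have h4 : |k j| ≤ (M : ℤ) := by exact_mod_cast h3
        exact h4
      · rw [hFk]; exact hη12
      · rw [hFk]; exact hη2
    refine ⟨η, hmem, ?_⟩
    -- final inequality
    have hAsplit : A η = A ξ + A (η - ξ) := by
      rw [← map_add]
      congr 1
      abel
    have h1 : ‖A η‖ ≤ ‖A ξ‖ + ‖A (η - ξ)‖ := by
      rw [hAsplit]; exact norm_add_le _ _
    rw [hδsq] at hnorm
    have hsum_nonneg : (0:ℝ) ≤ ∑ j : Fin n, ‖A (EuclideanSpace.single j (1:ℝ))‖^2 :=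
      Finset.sum_nonneg fun j _ => sq_nonneg _
    nlinarith [h1, hnorm, norm_nonneg (A η), norm_nonneg (A ξ), norm_nonneg (A (η - ξ)),
      sq_nonneg (‖A ξ‖ - ‖A (η - ξ)‖)]
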